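/- Let n ≥ 1 and let G and G' be graphs each with exactly n edges. Then ED(G) = ED(G') as multisets if and only if ι_n[G] = ι_n[G'] in K₀(Γ_{n,n−1}). -/

import Mathlib

open SimpleGraph

/-- A finite simple graph, packaged with its (finite) vertex type. -/
structure FGraph : Type 1 where
  V : Type
  [finV : Finite V]
  graph : SimpleGraph V

attribute [instance] FGraph.finV

namespace FGraph

/-- Two finite graphs are isomorphic if there is a graph isomorphism between them. -/
def IsIsoTo (G H : FGraph) : Prop := Nonempty (G.graph ≃g H.graph)

instance setoid : Setoid FGraph where
  r := IsIsoTo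
  iseqv := ⟨fun G => ⟨RelIso.refl G.graph.Adj⟩, fun ⟨e⟩ => ⟨e.symm⟩, fun ⟨e⟩ ⟨f⟩ => ⟨e.trans f⟩⟩

end FGraph

/-- Isomorphism classes of finite simple graphs. -/
def GraphClass : Type 1 := Quotient FGraph.setoid

namespace FGraph

/-- The isomorphism class of a finite graph. -/
def cls (G : FGraph) : GraphClass := Quotient.mk _ G

/-- The number of edges of a finite graph. -/
noncomputable def edgeCount (G : FGraph) : ℕ := G.graph.edgeSet.ncard

/-- The edge-deleted subgraph `G - e`: same vertices, with the edge `e` removed. -/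
def deleteEdge (G : FGraph) (e : Sym2 G.V) : FGraph :=
  { V := G.V, graph := G.graph.deleteEdges {e} }

/-- The multiset of edge-deleted subgraphs of `G` (one for each edge), as graphs. -/
noncomputable def deckGraphs (G : FGraph) : Multiset FGraph :=
  (G.graph.edgeSet.toFinite.toFinset.val).map fun e => G.deleteEdge e

/-- The edge deck of `G` : the multiset of isomorphism classes of the edge-deleted
subgraphs `G - e`, one for each edge `e` of `G`. -/
noncomputable def edgeDeck (G : FGraph) : Multiset GraphClass :=
  G.deckGraphs.map cls

lemma exists_of_mem_edgeDeck {G : FGraph} {c : GraphClass} (hc : c ∈ G.edgeDeck) :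
    ∃ H : FGraph, H.cls = c ∧ H.edgeCount = G.edgeCount - 1 := by
  classical
  rw [edgeDeck, deckGraphs, Multiset.map_map] at hc
  obtain ⟨e, he, rfl⟩ := Multiset.mem_map.mp hc
  refine ⟨G.deleteEdge e, rfl, ?_⟩
  have he' : e ∈ G.graph.edgeSet := by
    simpa using (Set.Finite.mem_toFinset _).mp he
  simp only [edgeCount, deleteEdge, SimpleGraph.edgeSet_deleteEdges]
  exact Set.ncard_sdiff_singleton_of_mem he'

/-- The disjoint union of two finite graphs. -/
def disjUnion (G H : FGraph) : FGraph :=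
  { V := G.V ⊕ H.V, graph := G.graph ⊕g H.graph }

end FGraph

/-- `𝒢 n` is the set of isomorphism classes of graphs with exactly `n` edges. -/
def GClass (n : ℕ) : Type 1 :=
  {c : GraphClass // ∃ G : FGraph, G.cls = c ∧ G.edgeCount = n}

/-- Given a graph `G` with `n` edges, sum a function `f` over the edge deck of `G`,
regarded as a multiset of isomorphism classes of graphs with `n - 1` edges. -/
noncomputable def FGraph.edgeDeckSum (n : ℕ) (G : FGraph) (hG : G.edgeCount = n)
    {β : Type*} [AddCommMonoid β] (f : GClass (n - 1) → β) : β :=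
  (G.edgeDeck.attach.map fun c => f ⟨c.1, by
    obtain ⟨H, h1, h2⟩ := FGraph.exists_of_mem_edgeDeck c.2
    exact ⟨H, h1, by rw [h2, hG]⟩⟩).sum

/-- The subgroup of relations defining `K₀(Γ_{n,n-1})`: for every graph `G` with `n`
edges, `[G] = Σ_{C ∈ ED(G)} [C]`. -/
def K0Rel (n : ℕ) : AddSubgroup (FreeAbelianGroup (GClass n ⊕ GClass (n - 1))) :=
  AddSubgroup.closure
    {x | ∃ (G : FGraph) (hG : G.edgeCount = n),
      x = FreeAbelianGroup.of (Sum.inl ⟨G.cls, G, rfl, hG⟩)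
        - G.edgeDeckSum n hG (fun c => FreeAbelianGroup.of (Sum.inr c))}

/-- `K₀(Γ_{n,n-1})`: the free abelian group on `𝒢 n ⊔ 𝒢 (n-1)` modulo the edge-deck
relations. -/
abbrev K0Gamma (n : ℕ) : Type 1 :=
  FreeAbelianGroup (GClass n ⊕ GClass (n - 1)) ⧸ K0Rel n

/-- The map `ι_n : 𝒢 n → K₀(Γ_{n,n-1})` sending a class to its image in the quotient. -/
noncomputable def iotaCls (n : ℕ) (c : GClass n) : K0Gamma n :=
  QuotientAddGroup.mk (FreeAbelianGroup.of (Sum.inl c))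

/-- Generalized edge reconstruction fails for `n`-edge graphs with `k` pieces: there are
two distinct multisets of `k` isomorphism classes of graphs with exactly `n` edges whose
total edge decks agree. -/
def GERFails (n k : ℕ) : Prop :=
  ∃ M M' : Multiset FGraph,
    Multiset.card M = k ∧ Multiset.card M' = k ∧
    (∀ G ∈ M, G.edgeCount = n) ∧ (∀ G ∈ M', G.edgeCount = n) ∧
    M.map FGraph.cls ≠ M'.map FGraph.cls ∧
    (M.map FGraph.edgeDeck).sum = (M'.map FGraph.edgeDeck).sum

/-- `kmin n` is the least `k ≥ 1` for which generalized edge reconstruction fails for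
`n`-edge graphs. -/
noncomputable def kmin (n : ℕ) : ℕ := sInf {k | 1 ≤ k ∧ GERFails n k}

/-- The graph `2K₂`: four vertices, two disjoint edges. -/
def twoK2 : FGraph :=
  { V := Fin 4, graph := SimpleGraph.fromEdgeSet {s(0, 1), s(2, 3)} }

/-- The graph `P₃ ⊔ K₁`: a two-edge path together with an isolated vertex. -/
def p3K1 : FGraph :=
  { V := Fin 4, graph := SimpleGraph.fromEdgeSet {s(0, 1), s(1, 2)} }

/-- The graph `K₃ ⊔ K₁`: a triangle together with an isolated vertex. -/
def k3K1 : FGraph :=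
  { V := Fin 4, graph := SimpleGraph.fromEdgeSet {s(0, 1), s(1, 2), s(0, 2)} }

/-- The star `K_{1,3}`: a center vertex adjacent to three leaves. -/
def k13 : FGraph :=
  { V := Fin 4, graph := SimpleGraph.fromEdgeSet {s(0, 1), s(0, 2), s(0, 3)} }

section Aux

open FGraph FreeAbelianGroup

/-- Deleting corresponding edges of isomorphic graphs yields isomorphic graphs. -/
noncomputable def deleteEdgeIsoAux {G H : FGraph} (e : G.graph ≃g H.graph) (s : Sym2 G.V) :
    (G.deleteEdge s).graph ≃g (H.deleteEdge (Sym2.map e s)).graph where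
  toEquiv := e.toEquiv
  map_rel_iff' := by
    intro a b
    change G.V at a b
    have key : s((e : G.V → H.V) a, (e : G.V → H.V) b) = Sym2.map (e : G.V → H.V) s
        ↔ s(a, b) = s := by
      constructor
      · intro h
        apply Sym2.map.injective e.injective
        rw [Sym2.map_pair_eq, h]
      · intro h
        rw [← h, Sym2.map_pair_eq]
    simp only [FGraph.deleteEdge, SimpleGraph.deleteEdges_adj, Set.mem_singleton_iff]
    exact and_congr e.map_rel_iff (not_congr key)

lemma edgeDeck_congr {G H : FGraph} (e : G.graph ≃g H.graph) :
    G.edgeDeck = H.edgeDeck := by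
  classical
  have hinj : Function.Injective (Sym2.map (e : G.V → H.V)) :=
    Sym2.map.injective e.injective
  have hfin : H.graph.edgeSet.toFinite.toFinset
      = G.graph.edgeSet.toFinite.toFinset.map ⟨Sym2.map (e : G.V → H.V), hinj⟩ := by
    ext s
    simp only [Set.Finite.mem_toFinset, Finset.mem_map, Function.Embedding.coeFn_mk]
    constructor
    · intro hs
      refine ⟨Sym2.map (e.symm : H.V → G.V) s, ?_, ?_⟩
      · exact e.symm.toHom.map_mem_edgeSet hs
      · rw [Sym2.map_map, show (e : G.V → H.V) ∘ (e.symm : H.V → G.V) = id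
          from e.toEquiv.self_comp_symm]
        exact congr_fun Sym2.map_id s
    · rintro ⟨t, ht, rfl⟩
      exact e.toHom.map_mem_edgeSet ht
  unfold FGraph.edgeDeck FGraph.deckGraphs
  rw [Multiset.map_map, Multiset.map_map, hfin, Finset.map_val, Multiset.map_map]
  apply Multiset.map_congr rfl
  intro s _
  exact Quotient.sound ⟨deleteEdgeIsoAux e s⟩

/-- The edge deck, as a function on isomorphism classes. -/
noncomputable def deckOfClass : GraphClass → Multiset GraphClass :=
  Quotient.lift FGraph.edgeDeck (fun _ _ ⟨e⟩ => edgeDeck_congr e)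

@[simp] lemma deckOfClass_cls (G : FGraph) : deckOfClass G.cls = G.edgeDeck := rfl

open scoped Classical

lemma coeff_sum_map_of (m : Multiset GraphClass) (x : GraphClass) :
    FreeAbelianGroup.coeff x ((m.map FreeAbelianGroup.of).sum) = m.count x := by
  classical
  induction m using Multiset.induction_on with
  | empty => simp
  | cons d m ih =>
    rw [Multiset.map_cons, Multiset.sum_cons, map_add, ih, Multiset.count_cons]
    rw [FreeAbelianGroup.coeff, AddMonoidHom.comp_apply, FreeAbelianGroup.toFinsupp_of]
    simp only [Finsupp.applyAddHom_apply, Finsupp.single_apply]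
    by_cases h : d = x <;> simp [h, eq_comm, add_comm]
    · simp [Ne.symm h]

lemma sum_map_of_injective {m m' : Multiset GraphClass}
    (h : (m.map FreeAbelianGroup.of).sum = (m'.map FreeAbelianGroup.of).sum) : m = m' := by
  classical
  ext x
  have := congrArg (FreeAbelianGroup.coeff x) h
  rw [coeff_sum_map_of, coeff_sum_map_of] at this
  exact_mod_cast this

/-- Rewrite `edgeDeckSum` as a plain sum over the edge deck. -/
lemma edgeDeckSum_eq (n : ℕ) (G : FGraph) (hG : G.edgeCount = n)
    {β : Type*} [AddCommMonoid β] (f : GClass (n - 1) → β) :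
    G.edgeDeckSum n hG f =
      (G.edgeDeck.map (fun c =>
        if h : ∃ H : FGraph, H.cls = c ∧ H.edgeCount = n - 1 then f ⟨c, h⟩ else 0)).sum := by
  unfold FGraph.edgeDeckSum
  have : (G.edgeDeck.attach.map fun c => f ⟨c.1, by
      obtain ⟨H, h1, h2⟩ := FGraph.exists_of_mem_edgeDeck c.2
      exact ⟨H, h1, by rw [h2, hG]⟩⟩)
      = G.edgeDeck.attach.map ((fun c =>
        if h : ∃ H : FGraph, H.cls = c ∧ H.edgeCount = n - 1 then f ⟨c, h⟩ else 0) ∘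
          Subtype.val) := by
    apply Multiset.map_congr rfl
    intro c _
    have h : ∃ H : FGraph, H.cls = c.1 ∧ H.edgeCount = n - 1 := by
      obtain ⟨H, h1, h2⟩ := FGraph.exists_of_mem_edgeDeck c.2
      exact ⟨H, h1, by rw [h2, hG]⟩
    simp [Function.comp, dif_pos h]
  rw [this, ← Multiset.map_map, Multiset.attach_map_val]

/-- The counting homomorphism used in the backward direction. -/
noncomputable def phi (n : ℕ) :
    FreeAbelianGroup (GClass n ⊕ GClass (n - 1)) →+ FreeAbelianGroup GraphClass :=
  FreeAbelianGroup.lift (fun x => match x with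
    | Sum.inl c => ((deckOfClass c.1).map FreeAbelianGroup.of).sum
    | Sum.inr c => FreeAbelianGroup.of c.1)

lemma phi_vanishes (n : ℕ) : K0Rel n ≤ (phi n).ker := by
  rw [K0Rel, AddSubgroup.closure_le]
  rintro x ⟨K, hK, rfl⟩
  simp only [SetLike.mem_coe, AddMonoidHom.mem_ker, map_sub]
  have h1 : phi n (FreeAbelianGroup.of (Sum.inl ⟨K.cls, K, rfl, hK⟩))
      = (K.edgeDeck.map FreeAbelianGroup.of).sum := by
    rw [phi, FreeAbelianGroup.lift_apply_of]
    rfl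
  have h2 : phi n (K.edgeDeckSum n hK (fun c => FreeAbelianGroup.of (Sum.inr c)))
      = (K.edgeDeck.map FreeAbelianGroup.of).sum := by
    rw [edgeDeckSum_eq, map_multiset_sum, Multiset.map_map]
    apply congrArg
    apply Multiset.map_congr rfl
    intro c hc
    have h : ∃ H : FGraph, H.cls = c ∧ H.edgeCount = n - 1 := by
      obtain ⟨H, ha, hb⟩ := FGraph.exists_of_mem_edgeDeck hc
      exact ⟨H, ha, by rw [hb, hK]⟩
    simp only [Function.comp_apply, dif_pos h]
    rw [phi, FreeAbelianGroup.lift_apply_of]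
  rw [h1, h2, sub_self]

end Aux

/-- for graphs `G`, `G'` with exactly `n ≥ 1` edges, `ED(G) = ED(G')`
if and only if `ι_n [G] = ι_n [G']` in `K₀(Γ_{n,n-1})`. -/
theorem edgeDeck_eq_iff_iota_eq (n : ℕ) (hn : 1 ≤ n) (G G' : FGraph)
    (hG : G.edgeCount = n) (hG' : G'.edgeCount = n) :
    G.edgeDeck = G'.edgeDeck ↔
      iotaCls n ⟨G.cls, G, rfl, hG⟩ = iotaCls n ⟨G'.cls, G', rfl, hG'⟩ := by
  constructor
  · intro hED
    unfold iotaCls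
    rw [QuotientAddGroup.eq_iff_sub_mem]
    have hS : G.edgeDeckSum n hG (fun c => (FreeAbelianGroup.of (Sum.inr c) :
          FreeAbelianGroup (GClass n ⊕ GClass (n - 1))))
        = G'.edgeDeckSum n hG' (fun c => FreeAbelianGroup.of (Sum.inr c)) := by
      rw [edgeDeckSum_eq, edgeDeckSum_eq, hED]
    have m1 : FreeAbelianGroup.of (Sum.inl (⟨G.cls, G, rfl, hG⟩ : GClass n))
        - G.edgeDeckSum n hG (fun c => FreeAbelianGroup.of (Sum.inr c)) ∈ K0Rel n :=
      AddSubgroup.subset_closure ⟨G, hG, rfl⟩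
    have m2 : FreeAbelianGroup.of (Sum.inl (⟨G'.cls, G', rfl, hG'⟩ : GClass n))
        - G'.edgeDeckSum n hG' (fun c => FreeAbelianGroup.of (Sum.inr c)) ∈ K0Rel n :=
      AddSubgroup.subset_closure ⟨G', hG', rfl⟩
    have := sub_mem m1 m2
    erw [hS] at this
    exact (sub_sub_sub_cancel_right _ _ _).subst (motive := fun x => x ∈ K0Rel n) this
  · intro hio
    unfold iotaCls at hio
    rw [QuotientAddGroup.eq_iff_sub_mem] at hio
    have := phi_vanishes n hio
    rw [AddMonoidHom.mem_ker, map_sub, sub_eq_zero] at this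
    have h1 : phi n (FreeAbelianGroup.of (Sum.inl (⟨G.cls, G, rfl, hG⟩ : GClass n)))
        = (G.edgeDeck.map FreeAbelianGroup.of).sum := by
      rw [phi, FreeAbelianGroup.lift_apply_of]
      rfl
    have h2 : phi n (FreeAbelianGroup.of (Sum.inl (⟨G'.cls, G', rfl, hG'⟩ : GClass n)))
        = (G'.edgeDeck.map FreeAbelianGroup.of).sum := by
      rw [phi, FreeAbelianGroup.lift_apply_of]
      rfl
    rw [h1, h2] at this
    exact sum_map_of_injective this
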